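/- arXiv:1111.3485 — 3 statements merged into one kernel-verified Lean document; each statement's English description precedes it below -/
import Mathlib

section
/- Let ξ be a primitive l-th root of unity, ζ_n a primitive n-th root of unity, and k a positive integer with gcd(k, nl) = 1. Then ∏_{i=0}^{n-1} η_k(ξ ζ_n^i) = η_k(ξ^n), where η_k(ζ) = 1 + ζ + ... + ζ^{k-1} for ζ ≠ 1 and η_k(1) = 1. -/
/-- The cyclotomic unit `η_k(z) = (1 - z^k)/(1 - z)` for `z ≠ 1`, and `η_k(1) = 1`. -/
noncomputable def eta (k : ℕ) (z : ℂ) : ℂ := if z = 1 then 1 else (1 - z ^ k) / (1 - z)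


/-- A map between finsets that is injective with `#t ≤ #s` is surjective. -/
lemma finset_surjOn_of_injOn {α β : Type*} [DecidableEq β] {s : Finset α} {t : Finset β}
    (f : α → β) (hmaps : ∀ a ∈ s, f a ∈ t) (hinj : (s : Set α).InjOn f)
    (hcard : t.card ≤ s.card) : (s : Set α).SurjOn f t := by
  have himg : s.image f ⊆ t := Finset.image_subset_iff.2 hmaps
  have heq : s.image f = t := Finset.eq_of_subset_of_card_le himg
    (by rw [Finset.card_image_of_injOn hinj]; exact hcard)
  rw [Set.SurjOn, ← Finset.coe_image, heq]

/-- Product over the coset `ξ · ⟨ζ⟩` equals product over all `n`-th roots of unity. -/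
lemma coset_prod {n : ℕ} (hn : 0 < n) {ζ : ℂ} (hζ : IsPrimitiveRoot ζ n) {ξ : ℂ}
    (hξ : ξ ^ n = 1) (F : ℂ → ℂ) :
    ∏ i ∈ Finset.range n, F (ξ * ζ ^ i) = ∏ z ∈ Polynomial.nthRootsFinset n (1 : ℂ), F z := by
  have hξ0 : ξ ≠ 0 := by
    rintro rfl
    rw [zero_pow hn.ne'] at hξ
    exact zero_ne_one hξ
  refine Finset.prod_nbij (fun i => ξ * ζ ^ i) ?_ ?_ ?_ (fun a _ => rfl)
  · intro i hi
    rw [Polynomial.mem_nthRootsFinset hn, mul_pow, hξ, one_mul, ← pow_mul, mul_comm i n,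
      pow_mul, hζ.pow_eq_one, one_pow]
  · intro i hi j hj h
    exact hζ.pow_inj (Finset.mem_range.1 hi) (Finset.mem_range.1 hj)
      (mul_left_cancel₀ hξ0 h)
  · apply finset_surjOn_of_injOn
    · intro i hi
      rw [Polynomial.mem_nthRootsFinset hn, mul_pow, hξ, one_mul, ← pow_mul,
        mul_comm i n, pow_mul, hζ.pow_eq_one, one_pow]
    · intro i hi j hj h
      exact hζ.pow_inj (Finset.mem_range.1 hi) (Finset.mem_range.1 hj)
        (mul_left_cancel₀ hξ0 h)
    · rw [hζ.card_nthRootsFinset, Finset.card_range]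

/-- `∏_{i<n} (1 - x ζ^i) = 1 - x^n` for a primitive `n`-th root of unity `ζ`. -/
lemma prod_one_sub_mul_pow {n : ℕ} (hn : 0 < n) {ζ : ℂ} (hζ : IsPrimitiveRoot ζ n) (x : ℂ) :
    ∏ i ∈ Finset.range n, (1 - x * ζ ^ i) = 1 - x ^ n := by
  have h := coset_prod hn hζ (ξ := 1) (one_pow n) (fun z => 1 - x * z)
  simp only [one_mul] at h
  rw [h]
  have h2 := IsPrimitiveRoot.pow_sub_pow_eq_prod_sub_mul (x := (1 : ℂ)) (y := x) hn hζ
  rw [one_pow] at h2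
  rw [h2]
  exact Finset.prod_congr rfl fun z _ => by rw [mul_comm]

/-- Coprime powers are injective on `n`-th roots of unity. -/
lemma eq_of_pow_eq_of_nthroot {n k : ℕ} (hn : 0 < n) (hco : k.Coprime n) {z w : ℂ}
    (hz : z ^ n = 1) (hw : w ^ n = 1) (h : z ^ k = w ^ k) : z = w := by
  have hw0 : w ≠ 0 := by
    rintro rfl
    rw [zero_pow hn.ne'] at hw
    exact zero_ne_one hw
  set a := z * w⁻¹ with ha
  have han : a ^ n = 1 := by
    rw [ha, mul_pow, hz, inv_pow, hw, inv_one, one_mul]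
  have hak : a ^ k = 1 := by
    rw [ha, mul_pow, h, inv_pow, mul_inv_cancel₀ (pow_ne_zero k hw0)]
  have h1 : orderOf a ∣ Nat.gcd k n :=
    Nat.dvd_gcd (orderOf_dvd_of_pow_eq_one hak) (orderOf_dvd_of_pow_eq_one han)
  rw [hco] at h1
  have ha1 : a = 1 := orderOf_eq_one_iff.1 (Nat.dvd_one.1 h1)
  rw [ha, mul_inv_eq_one₀ hw0] at ha1
  exact ha1

theorem prod_eta_eq_eta_pow {l n : ℕ} (hl : 0 < l) (hn : 0 < n) (ξ ζ : ℂ)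
    (hξ : IsPrimitiveRoot ξ l) (hζ : IsPrimitiveRoot ζ n)
    (k : ℕ) (hk : 0 < k) (hco : k.Coprime (n * l)) :
    ∏ i ∈ Finset.range n, eta k (ξ * ζ ^ i) = eta k (ξ ^ n) := by
  have hkn : k.Coprime n := Nat.Coprime.coprime_dvd_right (dvd_mul_right n l) hco
  by_cases hxn : ξ ^ n = 1
  · -- ξ^n = 1 : both sides are 1
    rw [hxn, show eta k 1 = 1 by simp [eta]]
    rw [coset_prod hn hζ hxn]
    have h1S : (1 : ℂ) ∈ Polynomial.nthRootsFinset n (1 : ℂ) := Polynomial.one_mem_nthRootsFinset hn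
    rw [← Finset.mul_prod_erase _ _ h1S, show eta k 1 = 1 by simp [eta], one_mul]
    set T := (Polynomial.nthRootsFinset n (1 : ℂ)).erase 1 with hT
    have hTmem : ∀ z ∈ T, z ^ n = 1 ∧ z ≠ 1 := by
      intro z hz
      rw [hT, Finset.mem_erase, Polynomial.mem_nthRootsFinset hn] at hz
      exact ⟨hz.2, hz.1⟩
    have hsplit : ∏ z ∈ T, eta k z = (∏ z ∈ T, (1 - z ^ k)) / ∏ z ∈ T, (1 - z) := by
      rw [← Finset.prod_div_distrib]
      exact Finset.prod_congr rfl fun z hz => by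
        rw [eta, if_neg (hTmem z hz).2]
    rw [hsplit]
    have hmaps : ∀ z ∈ T, z ^ k ∈ T := by
      intro z hz
      obtain ⟨hzn, hz1⟩ := hTmem z hz
      rw [hT, Finset.mem_erase, Polynomial.mem_nthRootsFinset hn]
      constructor
      · intro h1
        exact hz1 (eq_of_pow_eq_of_nthroot hn hkn hzn (one_pow n) (by rw [h1, one_pow]))
      · rw [← pow_mul, mul_comm k n, pow_mul, hzn, one_pow]
    have hinj : (T : Set ℂ).InjOn (fun z => z ^ k) := by
      intro z hz w hw h
      exact eq_of_pow_eq_of_nthroot hn hkn (hTmem z hz).1 (hTmem w hw).1 h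
    have hperm : ∏ z ∈ T, (1 - z ^ k) = ∏ z ∈ T, (1 - z) := by
      refine Finset.prod_nbij (fun z => z ^ k) hmaps hinj ?_ (fun a _ => rfl)
      exact finset_surjOn_of_injOn _ hmaps hinj le_rfl
    rw [hperm, div_self]
    exact Finset.prod_ne_zero_iff.2 fun z hz =>
      sub_ne_zero.2 fun h => (hTmem z hz).2 h.symm
  · -- ξ^n ≠ 1
    have hzk : IsPrimitiveRoot (ζ ^ k) n := hζ.pow_of_coprime k hkn
    have hfac : ∀ i ∈ Finset.range n, eta k (ξ * ζ ^ i) =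
        (1 - ξ ^ k * (ζ ^ k) ^ i) / (1 - ξ * ζ ^ i) := by
      intro i hi
      have hne : ξ * ζ ^ i ≠ 1 := by
        intro h
        apply hxn
        have : (ξ * ζ ^ i) ^ n = 1 := by rw [h, one_pow]
        rwa [mul_pow, ← pow_mul, mul_comm i n, pow_mul, hζ.pow_eq_one, one_pow, mul_one] at this
      rw [eta, if_neg hne]
      congr 2
      rw [mul_pow, ← pow_mul, mul_comm i k, pow_mul]
    rw [Finset.prod_congr rfl hfac, Finset.prod_div_distrib,
      prod_one_sub_mul_pow hn hzk (ξ ^ k), prod_one_sub_mul_pow hn hζ ξ,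
      eta, if_neg hxn, ← pow_mul, mul_comm k n, pow_mul]
end

section
/- Let G be a finite abelian group, g ∈ G, H a subgroup of G with G/H cyclic, ρ_H a linear character of G with kernel H, and K an arbitrary subgroup of G. Set h = |H ∩ K| and t = [K : H ∩ K]. Let k and m be positive integers such that gcd(k, t) = 1 and k^m ≡ 1 (mod |gu|) for every u ∈ K. Then ∏_{u ∈ K} ρ_H(u_{k,m}(gu)) = η_k(ρ_H(g)^t)^{m h}. -/
/-- The Bass unit element `u_{k,m}(g)` in the integral group ring `ℤG`. -/
noncomputable def bassElem {G : Type*} [Group G] (g : G) (k m : ℕ) : MonoidAlgebra ℤ G :=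
  (∑ i ∈ Finset.range k, MonoidAlgebra.of ℤ G (g ^ i)) ^ m
    + ((1 - (k : ℤ) ^ m) / (orderOf g : ℤ)) •
        ∑ i ∈ Finset.range (orderOf g), MonoidAlgebra.of ℤ G (g ^ i)

open Finset Polynomial

lemma eta_one (k : ℕ) : eta k 1 = 1 := if_pos rfl

lemma eta_of_ne (k : ℕ) {z : ℂ} (h : z ≠ 1) : eta k z = (1 - z ^ k) / (1 - z) := if_neg h

lemma lift_bassElem {G : Type*} [Group G] [Fintype G] (ρ : G →* ℂ) (x : G) (k m : ℕ)
    (hdvd : (orderOf x : ℤ) ∣ (1 - (k : ℤ) ^ m)) :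
    MonoidAlgebra.lift ℤ ℂ G ρ (bassElem x k m) = eta k (ρ x) ^ m := by
  have hz : (ρ x) ^ orderOf x = 1 := by rw [← map_pow, pow_orderOf_eq_one, map_one]
  simp only [bassElem, map_add, map_pow, map_sum, map_zsmul, MonoidAlgebra.lift_of]
  by_cases h1 : ρ x = 1
  · simp only [h1, one_pow, Finset.sum_const, Finset.card_range, nsmul_eq_mul, mul_one,
      eta_one, zsmul_eq_mul]
    have hc : (((1 - (k : ℤ) ^ m) / (orderOf x : ℤ) * (orderOf x : ℤ) : ℤ) : ℂ)
        = 1 - (k : ℂ) ^ m := by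
      rw [Int.ediv_mul_cancel hdvd]; push_cast; ring
    push_cast at hc ⊢
    linear_combination hc
  · rw [geom_sum_eq h1, geom_sum_eq h1, hz, sub_self, zero_div, smul_zero, add_zero,
      eta_of_ne k h1]
    have h2 : (1 - ρ x ^ k) / (1 - ρ x) = (ρ x ^ k - 1) / (ρ x - 1) := by
      rw [← neg_div_neg_eq]; ring_nf
    rw [h2]

lemma pow_k_inj {t k : ℕ} (hco : k.Coprime t) {a b : ℂ} (ha : a ^ t = 1) (hb : b ^ t = 1)
    (hab : a ^ k = b ^ k) : a = b := by
  rcases Nat.eq_zero_or_pos t with rfl | ht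
  · have hk1 : k = 1 := by simpa [Nat.Coprime] using hco
    simpa [hk1] using hab
  · have hb0 : b ≠ 0 := by
      intro h; rw [h, zero_pow ht.ne'] at hb; exact zero_ne_one hb
    have hu : a / b = 1 := by
      have h1 : (a / b) ^ t = 1 := by rw [div_pow, ha, hb, div_one]
      have h2 : (a / b) ^ k = 1 := by rw [div_pow, hab, div_self (pow_ne_zero _ hb0)]
      have := Nat.dvd_gcd (orderOf_dvd_of_pow_eq_one h2) (orderOf_dvd_of_pow_eq_one h1)
      rw [Nat.Coprime] at hco
      rw [hco, Nat.dvd_one, orderOf_eq_one_iff] at this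
      exact this
    exact (div_eq_one_iff_eq hb0).mp hu

lemma prod_one_sub_mul {t : ℕ} (ht : 0 < t) (w : ℂ) :
    ∏ ζ ∈ nthRootsFinset t (1 : ℂ), (1 - w * ζ) = 1 - w ^ t := by
  have hprim := Complex.isPrimitiveRoot_exp t ht.ne'
  have C0 : ∀ y : ℂ, ∏ ζ ∈ nthRootsFinset t (1 : ℂ), (y - ζ) = y ^ t - 1 := by
    intro y
    have := congrArg (eval y) (X_pow_sub_one_eq_prod ht hprim)
    simpa [eval_prod] using this.symm
  rcases eq_or_ne w 0 with rfl | hw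
  · simp [zero_pow ht.ne']
  · calc ∏ ζ ∈ nthRootsFinset t (1 : ℂ), (1 - w * ζ)
        = ∏ ζ ∈ nthRootsFinset t (1 : ℂ), w * (w⁻¹ - ζ) := by
          refine Finset.prod_congr rfl fun ζ _ => ?_
          rw [mul_sub, mul_inv_cancel₀ hw]
      _ = w ^ t * ((w⁻¹) ^ t - 1) := by
          rw [Finset.prod_mul_distrib, Finset.prod_const, hprim.card_nthRootsFinset, C0]
      _ = 1 - w ^ t := by
          rw [mul_sub, mul_one, ← mul_pow, mul_inv_cancel₀ hw, one_pow]

lemma prod_pow_comp {t k : ℕ} (ht : 0 < t) (hco : k.Coprime t) (f : ℂ → ℂ) :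
    ∏ ζ ∈ nthRootsFinset t (1 : ℂ), f (ζ ^ k) = ∏ ζ ∈ nthRootsFinset t (1 : ℂ), f ζ := by
  classical
  have hmem : ∀ ζ ∈ nthRootsFinset t (1 : ℂ), ζ ^ k ∈ nthRootsFinset t (1 : ℂ) := by
    intro ζ hζ
    rw [mem_nthRootsFinset ht (1 : ℂ)] at hζ ⊢
    rw [← pow_mul, mul_comm, pow_mul, hζ, one_pow]
  have hinj : ∀ a ∈ nthRootsFinset t (1 : ℂ), ∀ b ∈ nthRootsFinset t (1 : ℂ), a ^ k = b ^ k → a = b := by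
    intro a ha b hb hab
    exact pow_k_inj hco ((mem_nthRootsFinset ht (1 : ℂ)).mp ha) ((mem_nthRootsFinset ht (1 : ℂ)).mp hb) hab
  have himg : (nthRootsFinset t (1 : ℂ)).image (· ^ k) = nthRootsFinset t (1 : ℂ) := by
    apply Finset.eq_of_subset_of_card_le
    · intro x hx
      obtain ⟨ζ, hζ, rfl⟩ := Finset.mem_image.mp hx
      exact hmem ζ hζ
    · rw [Finset.card_image_of_injOn fun a ha b hb => hinj a ha b hb]
  conv_rhs => rw [← himg]
  rw [Finset.prod_image hinj]

lemma prod_eta_mul {t k : ℕ} (ht : 0 < t) (hco : k.Coprime t) (z : ℂ) :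
    ∏ ζ ∈ nthRootsFinset t (1 : ℂ), eta k (z * ζ) = eta k (z ^ t) := by
  classical
  by_cases h1 : z ^ t = 1
  · rw [h1, eta_one]
    have hz0 : z ≠ 0 := by
      intro h; rw [h, zero_pow ht.ne'] at h1; exact zero_ne_one h1
    -- multiplication by z permutes the roots
    have himg : (nthRootsFinset t (1 : ℂ)).image (z * ·) = nthRootsFinset t (1 : ℂ) := by
      apply Finset.eq_of_subset_of_card_le
      · intro x hx
        obtain ⟨ζ, hζ, rfl⟩ := Finset.mem_image.mp hx
        rw [mem_nthRootsFinset ht (1 : ℂ)] at hζ ⊢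
        rw [mul_pow, h1, hζ, one_mul]
      · rw [Finset.card_image_of_injective _ (mul_right_injective₀ hz0)]
    have step1 : ∏ ζ ∈ nthRootsFinset t (1 : ℂ), eta k (z * ζ)
        = ∏ ζ ∈ nthRootsFinset t (1 : ℂ), eta k ζ := by
      conv_rhs => rw [← himg]
      rw [Finset.prod_image fun a _ b _ h => mul_right_injective₀ hz0 h]
    rw [step1, ← Finset.mul_prod_erase _ _ ((one_mem_nthRootsFinset (R := ℂ) ht)), eta_one, one_mul]
    have hne1 : ∀ ζ ∈ (nthRootsFinset t (1 : ℂ)).erase 1, ζ ≠ 1 := fun ζ hζ =>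
      (Finset.mem_erase.mp hζ).1
    rw [Finset.prod_congr rfl fun ζ hζ => eta_of_ne k (hne1 ζ hζ), Finset.prod_div_distrib]
    have hperm : ∏ ζ ∈ (nthRootsFinset t (1 : ℂ)).erase 1, (1 - ζ ^ k)
        = ∏ ζ ∈ (nthRootsFinset t (1 : ℂ)).erase 1, (1 - ζ) := by
      have hmem : ∀ ζ ∈ (nthRootsFinset t (1 : ℂ)).erase 1,
          ζ ^ k ∈ (nthRootsFinset t (1 : ℂ)).erase 1 := by
        intro ζ hζ
        obtain ⟨hne, hmem⟩ := Finset.mem_erase.mp hζ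
        rw [mem_nthRootsFinset ht (1 : ℂ)] at hmem
        refine Finset.mem_erase.mpr ⟨fun h => hne ?_, (mem_nthRootsFinset ht (1 : ℂ)).mpr ?_⟩
        · exact pow_k_inj hco hmem (one_pow t) (by rw [h, one_pow])
        · rw [← pow_mul, mul_comm, pow_mul, hmem, one_pow]
      have hinj : ∀ a ∈ (nthRootsFinset t (1 : ℂ)).erase 1, ∀ b ∈ (nthRootsFinset t (1 : ℂ)).erase 1,
          a ^ k = b ^ k → a = b := by
        intro a ha b hb hab
        exact pow_k_inj hco ((mem_nthRootsFinset ht (1 : ℂ)).mp (Finset.mem_of_mem_erase ha))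
          ((mem_nthRootsFinset ht (1 : ℂ)).mp (Finset.mem_of_mem_erase hb)) hab
      have himg2 : ((nthRootsFinset t (1 : ℂ)).erase 1).image (· ^ k)
          = (nthRootsFinset t (1 : ℂ)).erase 1 := by
        apply Finset.eq_of_subset_of_card_le
        · intro x hx
          obtain ⟨ζ, hζ, rfl⟩ := Finset.mem_image.mp hx
          exact hmem ζ hζ
        · rw [Finset.card_image_of_injOn fun a ha b hb => hinj a ha b hb]
      conv_rhs => rw [← himg2]
      rw [Finset.prod_image hinj]
    rw [hperm, div_self]
    rw [Finset.prod_ne_zero_iff]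
    intro ζ hζ
    exact sub_ne_zero.mpr fun h => hne1 ζ hζ h.symm
  · -- z ^ t ≠ 1
    have hne : ∀ ζ ∈ nthRootsFinset t (1 : ℂ), z * ζ ≠ 1 := by
      intro ζ hζ h
      rw [mem_nthRootsFinset ht (1 : ℂ)] at hζ
      apply h1
      have : z ^ t * ζ ^ t = 1 := by rw [← mul_pow, h, one_pow]
      rwa [hζ, mul_one] at this
    rw [eta_of_ne k h1, Finset.prod_congr rfl fun ζ hζ => eta_of_ne k (hne ζ hζ),
      Finset.prod_div_distrib]
    have hnum : ∏ ζ ∈ nthRootsFinset t (1 : ℂ), (1 - (z * ζ) ^ k) = 1 - (z ^ t) ^ k := by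
      have := prod_pow_comp ht hco (fun w => 1 - z ^ k * w)
      calc ∏ ζ ∈ nthRootsFinset t (1 : ℂ), (1 - (z * ζ) ^ k)
          = ∏ ζ ∈ nthRootsFinset t (1 : ℂ), (1 - z ^ k * ζ ^ k) := by
            refine Finset.prod_congr rfl fun ζ _ => by rw [mul_pow]
        _ = ∏ ζ ∈ nthRootsFinset t (1 : ℂ), (1 - z ^ k * ζ) := this
        _ = 1 - (z ^ k) ^ t := prod_one_sub_mul ht (z ^ k)
        _ = 1 - (z ^ t) ^ k := by rw [← pow_mul, ← pow_mul, mul_comm]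
    rw [hnum, prod_one_sub_mul ht z]
theorem prod_character_bassElem {G : Type*} [CommGroup G] [Fintype G] (H K : Subgroup G)
    (hH : IsCyclic (G ⧸ H)) (ρ : G →* ℂ) (hker : ∀ x, ρ x = 1 ↔ x ∈ H)
    (g : G) (k m : ℕ) (hk : 0 < k) (hm : 0 < m)
    (hco : k.Coprime (Subgroup.relIndex H K))
    (hmod : ∀ u ∈ K, k ^ m ≡ 1 [MOD orderOf (g * u)]) :
    ∏ᶠ u : K, MonoidAlgebra.lift ℤ ℂ G ρ (bassElem (g * u) k m)
      = eta k (ρ g ^ Subgroup.relIndex H K) ^ (m * Nat.card (H ⊓ K : Subgroup G)) := by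
  classical
  rw [finprod_eq_prod_of_fintype]
  set t := Subgroup.relIndex H K with htdef
  set h := Nat.card (H ⊓ K : Subgroup G) with hhdef
  have ht : 0 < t := Nat.pos_of_ne_zero (Subgroup.index_ne_zero_of_finite)
  have hprim := Complex.isPrimitiveRoot_exp t ht.ne'
  -- Step 1 : pointwise evaluation of the Bass units
  have step1 : ∀ u : K, MonoidAlgebra.lift ℤ ℂ G ρ (bassElem (g * ↑u) k m)
      = eta k (ρ g * ρ ↑u) ^ m := by
    intro u
    rw [lift_bassElem ρ (g * ↑u) k m ?_, map_mul]
    have := (hmod ↑u u.2).dvd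
    exact_mod_cast this
  rw [Finset.prod_congr rfl fun u _ => step1 u, Finset.prod_pow]
  -- the values of ρ on K
  set φ : K → ℂ := fun u => ρ ↑u with hφdef
  set ψ : K →* ℂˣ := (ρ.comp K.subtype).toHomUnits with hψdef
  have hφψ : ∀ u : K, φ u = ↑(ψ u) := fun u => rfl
  -- each value is a t-th root of unity
  have hmemS : ∀ u : K, φ u ∈ Polynomial.nthRootsFinset t (1 : ℂ) := by
    intro u
    rw [Polynomial.mem_nthRootsFinset ht (1 : ℂ)]
    have hpow : ((u ^ t : K) : G) ∈ H :=
      Subgroup.mem_subgroupOf.mp ((H.subgroupOf K).pow_index_mem u)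
    have : ρ ((u ^ t : K) : G) = 1 := (hker _).mpr hpow
    rw [← this]
    push_cast
    rw [map_pow]
  -- cardinality of the subgroup H ⊓ K seen inside K
  have hcardH : Nat.card (H.subgroupOf K) = h := by
    rw [← Subgroup.inf_subgroupOf_right H K, hhdef]
    exact Nat.card_congr (Subgroup.subgroupOfEquivOfLe inf_le_right).toEquiv
  have hcard1 : (Finset.univ.filter fun u : K => φ u = 1).card = h := by
    have hset : (Finset.univ.filter fun u : K => φ u = 1)
        = (Finset.univ.filter fun u : K => u ∈ H.subgroupOf K) := by
      refine Finset.filter_congr fun u _ => ?_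
      rw [hφdef]
      simp only [Subgroup.mem_subgroupOf, ← hker ↑u]
    rw [hset, ← hcardH, Nat.card_eq_fintype_card, Fintype.card_subtype]
  -- fibers of φ all have cardinality h
  have hfib : ∀ b ∈ Finset.univ.image φ,
      (Finset.univ.filter fun u : K => φ u = b).card = h := by
    intro b hb
    obtain ⟨u0, -, hu0⟩ := Finset.mem_image.mp hb
    rw [← hcard1]
    apply Finset.card_bij' (fun v _ => u0⁻¹ * v) (fun w _ => u0 * w)
    · intro v hv
      simp only [Finset.mem_filter, Finset.mem_univ, true_and] at hv ⊢
      have hv' : ψ v = ψ u0 := Units.ext (by rw [← hφψ, ← hφψ, hv, hu0])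
      rw [hφψ, map_mul, map_inv, hv', inv_mul_cancel, Units.val_one]
    · intro w hw
      simp only [Finset.mem_filter, Finset.mem_univ, true_and] at hw ⊢
      have hw' : ψ w = 1 := Units.ext (by rw [← hφψ, hw, Units.val_one])
      rw [hφψ, map_mul, hw', mul_one, ← hu0, hφψ]
    · intro v _; group
    · intro w _; group
  -- the image of φ is precisely the set of t-th roots of unity
  have himgS : Finset.univ.image φ = Polynomial.nthRootsFinset t (1 : ℂ) := by
    have hsub : Finset.univ.image φ ⊆ Polynomial.nthRootsFinset t (1 : ℂ) := by
      intro x hx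
      obtain ⟨u, -, rfl⟩ := Finset.mem_image.mp hx
      exact hmemS u
    have hpos : 0 < h := by rw [← hcardH]; exact Nat.card_pos
    have hcount : (Finset.univ.image φ).card * h = h * t := by
      have h1 := Finset.card_eq_sum_card_image φ (Finset.univ : Finset K)
      rw [Finset.sum_congr rfl hfib, Finset.sum_const, smul_eq_mul] at h1
      have h2 : Nat.card (H.subgroupOf K) * (H.subgroupOf K).index = Nat.card K :=
        Subgroup.card_mul_index _
      rw [hcardH] at h2
      rw [← h1, Finset.card_univ, ← Nat.card_eq_fintype_card, ← h2]
      rfl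
    have hcardimg : (Finset.univ.image φ).card = t := by
      rw [mul_comm h t] at hcount
      exact Nat.eq_of_mul_eq_mul_right hpos hcount
    apply Finset.eq_of_subset_of_card_le hsub
    rw [hcardimg, hprim.card_nthRootsFinset]
  -- regroup the product over the fibers of φ
  have hregroup : ∏ u : K, eta k (ρ g * φ u)
      = eta k (ρ g ^ t) ^ h := by
    rw [Finset.prod_comp (fun w => eta k (ρ g * w)) φ,
      Finset.prod_congr rfl fun b hb => by rw [hfib b hb], himgS, Finset.prod_pow,
      prod_eta_mul ht hco (ρ g)]
  rw [hregroup, ← pow_mul, mul_comm h m]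
end

section
/- Let g be an element of order n in a group G and let k, k₁, m be positive integers with k^m ≡ 1 (mod n) and k₁^m ≡ 1 (mod n). Then u_{k,m}(g) · u_{k₁,m}(g^k) = u_{k k₁, m}(g). -/
open Finset

section Aux

variable {G : Type*} [Group G]

/-- The sum of all powers of `g`. -/
noncomputable def sigElem (g : G) : MonoidAlgebra ℤ G :=
  ∑ i ∈ Finset.range (orderOf g), MonoidAlgebra.of ℤ G (g ^ i)

lemma of_mul_sig (g : G) : MonoidAlgebra.of ℤ G g * sigElem g = sigElem g := by
  unfold sigElem
  rw [Finset.mul_sum]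
  simp_rw [← map_mul, ← pow_succ']
  have key : (∑ i ∈ range (orderOf g), MonoidAlgebra.of ℤ G (g ^ (i + 1)))
      + MonoidAlgebra.of ℤ G (g ^ 0)
      = (∑ i ∈ range (orderOf g), MonoidAlgebra.of ℤ G (g ^ i))
      + MonoidAlgebra.of ℤ G (g ^ orderOf g) :=
    (Finset.sum_range_succ' (fun i => MonoidAlgebra.of ℤ G (g ^ i)) (orderOf g)).symm.trans
      (Finset.sum_range_succ (fun i => MonoidAlgebra.of ℤ G (g ^ i)) (orderOf g))
  rw [pow_orderOf_eq_one, pow_zero] at key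
  exact add_right_cancel key

lemma of_pow_mul_sig (g : G) (j : ℕ) :
    MonoidAlgebra.of ℤ G (g ^ j) * sigElem g = sigElem g := by
  induction j with
  | zero => rw [pow_zero, map_one, one_mul]
  | succ j ih => rw [pow_succ', map_mul, mul_assoc, ih, of_mul_sig]

lemma sig_mul_of_pow (g : G) (j : ℕ) :
    sigElem g * MonoidAlgebra.of ℤ G (g ^ j) = sigElem g := by
  have : sigElem g * MonoidAlgebra.of ℤ G (g ^ j)
      = MonoidAlgebra.of ℤ G (g ^ j) * sigElem g := by
    unfold sigElem
    rw [Finset.sum_mul, Finset.mul_sum]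
    exact Finset.sum_congr rfl fun i _ => by
      rw [← map_mul, ← map_mul, ← pow_add, ← pow_add, Nat.add_comm]
  rw [this, of_pow_mul_sig]

lemma geom_mul_sig (g : G) (k : ℕ) :
    (∑ i ∈ range k, MonoidAlgebra.of ℤ G (g ^ i)) * sigElem g = (k : ℤ) • sigElem g := by
  rw [Finset.sum_mul]
  simp_rw [of_pow_mul_sig]
  rw [Finset.sum_const, card_range, natCast_zsmul]

lemma sig_mul_geom (g : G) (k k₁ : ℕ) :
    sigElem g * (∑ j ∈ range k₁, MonoidAlgebra.of ℤ G ((g ^ k) ^ j))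
      = (k₁ : ℤ) • sigElem g := by
  rw [Finset.mul_sum]
  simp_rw [← pow_mul, sig_mul_of_pow]
  rw [Finset.sum_const, card_range, natCast_zsmul]

lemma sig_mul_sig (g : G) : sigElem g * sigElem g = (orderOf g : ℤ) • sigElem g :=
  geom_mul_sig g (orderOf g)

lemma pow_mul_sig {g : G} {x : MonoidAlgebra ℤ G} {c : ℤ}
    (hx : x * sigElem g = c • sigElem g) (m : ℕ) :
    x ^ m * sigElem g = c ^ m • sigElem g := by
  induction m with
  | zero => simp
  | succ m ih =>
      rw [pow_succ, mul_assoc, hx, mul_smul_comm, ih, smul_smul, ← pow_succ']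

lemma sig_mul_pow {g : G} {x : MonoidAlgebra ℤ G} {c : ℤ}
    (hx : sigElem g * x = c • sigElem g) (m : ℕ) :
    sigElem g * x ^ m = c ^ m • sigElem g := by
  induction m with
  | zero => simp
  | succ m ih =>
      rw [pow_succ', ← mul_assoc, hx, smul_mul_assoc, ih, smul_smul, ← pow_succ']

lemma geom_mul_geom (g : G) (k k₁ : ℕ) (hk : 0 < k) :
    (∑ i ∈ range k, MonoidAlgebra.of ℤ G (g ^ i))
        * (∑ j ∈ range k₁, MonoidAlgebra.of ℤ G ((g ^ k) ^ j))
      = ∑ t ∈ range (k * k₁), MonoidAlgebra.of ℤ G (g ^ t) := by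
  rw [Finset.sum_mul_sum, ← Finset.sum_product']
  refine Finset.sum_nbij' (fun p => p.1 + k * p.2) (fun t => (t % k, t / k))
    ?_ ?_ ?_ ?_ ?_
  · rintro ⟨i, j⟩ hp
    rw [Finset.mem_product, mem_range, mem_range] at hp
    rw [mem_range]
    calc i + k * j < k + k * j := by omega
      _ = k * (j + 1) := by ring
      _ ≤ k * k₁ := Nat.mul_le_mul_left k hp.2
  · intro t ht
    rw [mem_range] at ht
    rw [Finset.mem_product, mem_range, mem_range]
    exact ⟨Nat.mod_lt _ hk, Nat.div_lt_of_lt_mul ht⟩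
  · rintro ⟨i, j⟩ hp
    rw [Finset.mem_product, mem_range, mem_range] at hp
    have h1 : (i + k * j) % k = i := by
      rw [Nat.add_mul_mod_self_left, Nat.mod_eq_of_lt hp.1]
    have h2 : (i + k * j) / k = j := by
      rw [Nat.add_mul_div_left _ _ hk, Nat.div_eq_of_lt hp.1, Nat.zero_add]
    simp [h1, h2]
  · intro t _
    simp [Nat.mod_add_div]
  · rintro ⟨i, j⟩ _
    rw [← map_mul, ← pow_mul, ← pow_add]

lemma pow_inj_of_lt (g : G) {x y : ℕ} (hx : x ∈ range (orderOf g))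
    (hy : y ∈ range (orderOf g)) (hxy : g ^ x = g ^ y) : x = y := by
  rw [pow_eq_pow_iff_modEq] at hxy
  rwa [Nat.ModEq, Nat.mod_eq_of_lt (mem_range.mp hx),
    Nat.mod_eq_of_lt (mem_range.mp hy)] at hxy

lemma sig_pow_eq (g : G) (k : ℕ) (hn : 0 < orderOf g)
    (hcop : Nat.Coprime (orderOf g) k) : sigElem (g ^ k) = sigElem g := by
  classical
  have hord : orderOf (g ^ k) = orderOf g := hcop.orderOf_pow
  have himage : (range (orderOf (g ^ k))).image ((g ^ k) ^ ·)
      = (range (orderOf g)).image (g ^ ·) := by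
    classical
    apply Finset.eq_of_subset_of_card_le
    · intro x hx
      rw [Finset.mem_image] at hx ⊢
      obtain ⟨i, _, rfl⟩ := hx
      exact ⟨(k * i) % orderOf g, Finset.mem_range.mpr (Nat.mod_lt _ hn),
        by rw [pow_mod_orderOf, pow_mul]⟩
    · rw [Finset.card_image_of_injOn (fun x hx y hy => pow_inj_of_lt g hx hy),
        Finset.card_image_of_injOn (fun x hx y hy => pow_inj_of_lt (g ^ k) hx hy),
        card_range, card_range, hord]
  calc sigElem (g ^ k)
      = ∑ x ∈ (range (orderOf (g ^ k))).image ((g ^ k) ^ ·), MonoidAlgebra.of ℤ G x :=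
        (Finset.sum_image (fun x hx y hy => pow_inj_of_lt (g ^ k) hx hy)).symm
    _ = ∑ x ∈ (range (orderOf g)).image (g ^ ·), MonoidAlgebra.of ℤ G x := by rw [himage]
    _ = sigElem g := Finset.sum_image (fun x hx y hy => pow_inj_of_lt g hx hy)

lemma coprime_of_pow_modEq_one {n a m : ℕ} (hm : 0 < m) (h : a ^ m ≡ 1 [MOD n]) :
    Nat.Coprime n a := by
  have hpow : Nat.Coprime n (a ^ m) := by
    unfold Nat.Coprime
    calc Nat.gcd n (a ^ m) = Nat.gcd (a ^ m % n) n := Nat.gcd_rec n (a ^ m)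
      _ = Nat.gcd (1 % n) n := by rw [h]
      _ = Nat.gcd n 1 := (Nat.gcd_rec n 1).symm
      _ = 1 := Nat.gcd_one_right n
  exact (Nat.coprime_pow_right_iff hm n a).mp hpow

lemma dvd_one_sub_pow {n a m : ℕ} (h : a ^ m ≡ 1 [MOD n]) :
    (n : ℤ) ∣ 1 - (a : ℤ) ^ m := by
  have : (a ^ m : ℤ) ≡ (1 : ℕ) [ZMOD (n : ℤ)] := by
    have := Int.natCast_modEq_iff.mpr h
    exact_mod_cast this
  have hd := this.dvd
  push_cast at hd
  exact hd

end Aux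

theorem bassElem_mul_pow {G : Type*} [Group G] (g : G) (hord : 0 < orderOf g)
    (k k₁ m : ℕ) (hk : 0 < k) (hk₁ : 0 < k₁) (hm : 0 < m)
    (h : k ^ m ≡ 1 [MOD orderOf g]) (h₁ : k₁ ^ m ≡ 1 [MOD orderOf g]) :
    bassElem g k m * bassElem (g ^ k) k₁ m = bassElem g (k * k₁) m := by
  set n := orderOf g with hn
  have hcop : Nat.Coprime n k := coprime_of_pow_modEq_one hm h
  have hordk : orderOf (g ^ k) = n := hcop.orderOf_pow
  have hS : sigElem (g ^ k) = sigElem g := sig_pow_eq g k hord hcop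
  set A := ∑ i ∈ range k, MonoidAlgebra.of ℤ G (g ^ i) with hA
  set B := ∑ j ∈ range k₁, MonoidAlgebra.of ℤ G ((g ^ k) ^ j) with hB
  set C := ∑ t ∈ range (k * k₁), MonoidAlgebra.of ℤ G (g ^ t) with hC
  set S := sigElem g with hSdef
  set α := (1 - (k : ℤ) ^ m) / (n : ℤ) with hαdef
  set β := (1 - (k₁ : ℤ) ^ m) / (n : ℤ) with hβdef
  set γ := (1 - ((k * k₁ : ℕ) : ℤ) ^ m) / (n : ℤ) with hγdef
  have hgoal : bassElem g k m = A ^ m + α • S := rfl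
  have hgoal₂ : bassElem (g ^ k) k₁ m
      = B ^ m + ((1 - (k₁ : ℤ) ^ m) / ((orderOf (g ^ k)) : ℤ)) • sigElem (g ^ k) := rfl
  have hgoal₃ : bassElem g (k * k₁) m = C ^ m + γ • S := rfl
  rw [hgoal, hgoal₂, hgoal₃, hordk, hS, ← hβdef]
  -- scalar identities
  have hnz : (n : ℤ) ≠ 0 := by exact_mod_cast hord.ne'
  have hα : α * n = 1 - (k : ℤ) ^ m := Int.ediv_mul_cancel (dvd_one_sub_pow h)
  have hβ : β * n = 1 - (k₁ : ℤ) ^ m := Int.ediv_mul_cancel (dvd_one_sub_pow h₁)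
  have hkk : (k * k₁) ^ m ≡ 1 [MOD n] := by
    calc (k * k₁) ^ m = k ^ m * k₁ ^ m := by rw [mul_pow]
      _ ≡ 1 * 1 [MOD n] := Nat.ModEq.mul h h₁
      _ = 1 := one_mul 1
  have hγ : γ * n = 1 - ((k * k₁ : ℕ) : ℤ) ^ m := Int.ediv_mul_cancel (dvd_one_sub_pow hkk)
  have hscal : β * (k : ℤ) ^ m + (α * (k₁ : ℤ) ^ m + α * β * (n : ℤ)) = γ := by
    apply mul_right_cancel₀ hnz
    rw [hγ]
    push_cast
    linear_combination ((k : ℤ) ^ m) * hβ + ((k₁ : ℤ) ^ m) * hα + (α * (n : ℤ)) * hβ + (1 - (k₁ : ℤ) ^ m) * hα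
  -- algebra
  have hAm : A ^ m * S = ((k : ℤ) ^ m) • S := pow_mul_sig (geom_mul_sig g k) m
  have hSBm : S * B ^ m = ((k₁ : ℤ) ^ m) • S := sig_mul_pow (sig_mul_geom g k k₁) m
  have hSS : S * S = (n : ℤ) • S := sig_mul_sig g
  have hcomm : Commute A B := by
    refine Commute.sum_left _ _ _ fun i _ => Commute.sum_right _ _ _ fun j _ => ?_
    exact Commute.map (((Commute.refl g).pow_right k).pow_pow i j) (MonoidAlgebra.of ℤ G)
  have hprod : A ^ m * B ^ m = C ^ m := by
    rw [← hcomm.mul_pow, hA, hB, geom_mul_geom g k k₁ hk]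
  have e1 : A ^ m * (β • S) = (β * (k : ℤ) ^ m) • S := by
    rw [mul_smul_comm, hAm, smul_smul]
  have e2 : (α • S) * B ^ m = (α * (k₁ : ℤ) ^ m) • S := by
    rw [smul_mul_assoc, hSBm, smul_smul]
  have e3 : (α • S) * (β • S) = (α * β * (n : ℤ)) • S := by
    rw [smul_mul_assoc, mul_smul_comm, hSS, smul_smul, smul_smul, mul_assoc]
  calc (A ^ m + α • S) * (B ^ m + β • S)
      = A ^ m * B ^ m + (A ^ m * (β • S) + ((α • S) * B ^ m + (α • S) * (β • S))) := by
        rw [add_mul, mul_add, mul_add, add_assoc]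
    _ = C ^ m + ((β * (k : ℤ) ^ m) • S + ((α * (k₁ : ℤ) ^ m) • S + (α * β * (n : ℤ)) • S)) := by
        rw [hprod, e1, e2, e3]
    _ = C ^ m + γ • S := by rw [← add_smul, ← add_smul, hscal]
end
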